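/- Let p be a prime and h ≥ 2, and let A be the unique h × h matrix over T = ℚ_p⟦u₁, …, u_{h−1}⟧ with all entries of A − I in J = (u₁, …, u_{h−1}) satisfying A = Ψ · σ(A) · Ψ̄⁻¹, where σ(u_i) = u_i^p and Ψ, Ψ̄ are as follows: Ψ_{i,i+1} = p for 1 ≤ i ≤ h−2, Ψ_{h−1,h} = 1, Ψ_{h,1} = p, Ψ_{h,j} = p·u_{h−j+1} for 2 ≤ j ≤ h−1, Ψ_{h,h} = u₁, all other entries 0, and Ψ̄ is Ψ with all u_i replaced by 0. Then A ≡ I + E mod J^p, where E is the matrix with E_{h,j} = u_{h−j} for 1 ≤ j ≤ h−1 and all other entries 0; that is, every entry of A − (I + E) lies in J^p. -/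

import Mathlib

/-- The matrix `Ψ` (1-indexed entries): `Ψ_{i,i+1} = p` for `1 ≤ i ≤ h−2`, `Ψ_{h−1,h} = 1`,
`Ψ_{h,1} = p`, `Ψ_{h,j} = p·u_{h−j+1}` for `2 ≤ j ≤ h−1`, `Ψ_{h,h} = u₁`, others `0`. -/
def periodPsi (p h : ℕ) (S : Type) [CommRing S] (u : ℕ → S) : Matrix (Fin h) (Fin h) S :=
  Matrix.of fun i j =>
    if (i : ℕ) + 1 ≤ h - 2 ∧ (j : ℕ) + 1 = (i : ℕ) + 2 then (p : S)
    else if (i : ℕ) + 1 = h - 1 ∧ (j : ℕ) + 1 = h then 1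
    else if (i : ℕ) + 1 = h ∧ (j : ℕ) + 1 = 1 then (p : S)
    else if (i : ℕ) + 1 = h ∧ 2 ≤ (j : ℕ) + 1 ∧ (j : ℕ) + 1 ≤ h - 1 then
      (p : S) * u (h - ((j : ℕ) + 1) + 1)
    else if (i : ℕ) + 1 = h ∧ (j : ℕ) + 1 = h then u 1
    else 0

/-- The matrix `E` with `E_{h,j} = u_{h−j}` for `1 ≤ j ≤ h−1` and all other entries `0`
(1-indexed). -/
def periodE (h : ℕ) (S : Type) [CommRing S] (u : ℕ → S) : Matrix (Fin h) (Fin h) S :=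
  Matrix.of fun i j =>
    if (i : ℕ) + 1 = h ∧ (j : ℕ) + 1 ≤ h - 1 then u (h - ((j : ℕ) + 1)) else 0

open MvPowerSeries in

lemma mem_pow_span_X {K : Type} [CommRing K] {n : ℕ} (m : ℕ)
    (F : MvPowerSeries (Fin n) K)
    (hF : ∀ d : Fin n →₀ ℕ, (∑ i, d i) < m → MvPowerSeries.coeff d F = 0) :
    F ∈ (Ideal.span (Set.range (MvPowerSeries.X : Fin n → MvPowerSeries (Fin n) K))) ^ m := by
  induction m generalizing F with
  | zero => simp
  | succ m ih =>
    classical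
    set G : Fin n → MvPowerSeries (Fin n) K := fun i =>
      fun d => if (∀ j, j < i → d j = 0) then
        MvPowerSeries.coeff (d + Finsupp.single i 1) F else 0 with hG
    have hGc : ∀ i d, MvPowerSeries.coeff d (G i) =
        if (∀ j, j < i → d j = 0) then
          MvPowerSeries.coeff (d + Finsupp.single i 1) F else 0 := fun i d => rfl
    have hFG : F = ∑ i, MvPowerSeries.X i * G i := by
      ext d
      rw [map_sum]
      have hc : ∀ i : Fin n, MvPowerSeries.coeff d (MvPowerSeries.X i * G i) =
          if Finsupp.single i 1 ≤ d ∧ (∀ j, j < i → d j = 0) then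
            MvPowerSeries.coeff d F else 0 := by
        intro i
        rw [MvPowerSeries.X, coeff_monomial_mul]
        by_cases hle : Finsupp.single i 1 ≤ d
        · rw [if_pos hle, one_mul, hGc]
          have hsub : ∀ j : Fin n, j ≠ i → ((d - Finsupp.single i 1 : Fin n →₀ ℕ)) j = d j := by
            intro j hj
            rw [Finsupp.tsub_apply, Finsupp.single_apply, if_neg (Ne.symm hj), Nat.sub_zero]
          have hcond : (∀ j, j < i → ((d - Finsupp.single i 1 : Fin n →₀ ℕ)) j = 0) ↔
              (∀ j, j < i → d j = 0) := by
            constructor <;> intro hh j hji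
            · rw [← hsub j (ne_of_lt hji)]; exact hh j hji
            · rw [hsub j (ne_of_lt hji)]; exact hh j hji
          rw [tsub_add_cancel_of_le hle]
          simp only [hcond]
          by_cases hc : ∀ j, j < i → d j = 0
          · rw [if_pos hc, if_pos ⟨hle, hc⟩]
          · rw [if_neg hc, if_neg (fun hx => hc hx.2)]
        · simp [hle]
      rw [Finset.sum_congr rfl (fun i _ => hc i)]
      by_cases hd : d = 0
      · subst hd
        rw [hF 0 (by simp)]
        refine (Finset.sum_eq_zero ?_).symm
        intro i _
        rw [if_neg]
        rintro ⟨hle, -⟩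
        have := Finsupp.single_le_iff.mp hle
        simp at this
      · have hne : d.support.Nonempty := Finsupp.support_nonempty_iff.mpr hd
        set i₀ := d.support.min' hne with hi₀
        have hi₀m : d i₀ ≠ 0 := Finsupp.mem_support_iff.mp (d.support.min'_mem hne)
        have hmin : ∀ j, j < i₀ → d j = 0 := by
          intro j hj
          by_contra hjne
          exact absurd (d.support.min'_le j (Finsupp.mem_support_iff.mpr hjne)) (not_le.mpr hj)
        rw [Finset.sum_eq_single i₀]
        · rw [if_pos ⟨Finsupp.single_le_iff.mpr (Nat.one_le_iff_ne_zero.mpr hi₀m), hmin⟩]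
        · intro i _ hi
          rw [if_neg]
          rintro ⟨hle, hz⟩
          have hdi : d i ≠ 0 := by
            have := Finsupp.single_le_iff.mp hle; omega
          rcases lt_or_gt_of_ne hi with hlt | hgt
          · exact hdi (hmin i hlt)
          · exact hi₀m (hz i₀ hgt)
        · intro hni; exact absurd (Finset.mem_univ i₀) hni
    rw [hFG, pow_succ']
    refine Ideal.sum_mem _ fun i _ => Ideal.mul_mem_mul ?_ ?_
    · exact Ideal.subset_span ⟨i, rfl⟩
    · refine ih (G i) ?_
      intro d hd
      rw [hGc]
      split_ifs with hcond
      · refine hF _ ?_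
        have : ∀ j, ((d + Finsupp.single i 1 : Fin n →₀ ℕ)) j = d j + Finsupp.single i 1 j := fun j =>
          Finsupp.add_apply d (Finsupp.single i 1) j
        calc ∑ j, ((d + Finsupp.single i 1 : Fin n →₀ ℕ)) j = (∑ j, d j) + ∑ j, Finsupp.single i 1 j := by
              rw [← Finset.sum_add_distrib]; exact Finset.sum_congr rfl fun j _ => this j
          _ = (∑ j, d j) + 1 := by
              congr 1
              rw [Finset.sum_eq_single i (fun j _ hj => Finsupp.single_eq_of_ne hj)
                (fun hni => absurd (Finset.mem_univ i) hni), Finsupp.single_eq_same]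
          _ < m + 1 := by omega
      · rfl

def periodPhi (h : ℕ) (S : Type) [CommRing S] (c : S) : Matrix (Fin h) (Fin h) S :=
  Matrix.of fun i j =>
    if 1 ≤ (i : ℕ) ∧ (i : ℕ) ≤ h - 2 ∧ (j : ℕ) + 1 = (i : ℕ) then c
    else if (i : ℕ) + 1 = h ∧ (j : ℕ) + 2 = h then 1
    else if (i : ℕ) = 0 ∧ (j : ℕ) + 1 = h then c
    else 0

lemma psi_mul_phi (p h : ℕ) (hh : 2 ≤ h) (S : Type) [CommRing S] (u : ℕ → S) (c : S)
    (hpc : (p : S) * c = 1) :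
    periodPsi p h S u * periodPhi h S c = 1 + periodE h S u := by
  ext i k
  rw [Matrix.mul_apply]
  by_cases hk : (k : ℕ) + 2 ≤ h
  · rw [Finset.sum_eq_single (⟨(k : ℕ) + 1, by omega⟩ : Fin h)]
    · simp only [periodPsi, periodPhi, periodE, Matrix.of_apply, Matrix.add_apply,
        Matrix.one_apply, Fin.ext_iff, Fin.val_mk, true_and, and_true, false_and, and_false,
        if_true, if_false, not_true, not_false_iff]
      rw [show h - ((k : ℕ) + 1 + 1) + 1 = h - ((k : ℕ) + 1) from by omega]
      split_ifs <;>
        first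
          | (exfalso; omega)
          | linear_combination hpc
          | linear_combination (u (h - ((k : ℕ) + 1))) * hpc
          | linear_combination (u (h - (1 + (k : ℕ)))) * hpc
          | (rw [show h - ((k : ℕ) + 1) = 1 from by omega]; ring)
          | (rw [show h - (1 + (k : ℕ)) = 1 from by omega]; ring)
          | ring
    · intro j _ hjne
      have hv : (j : ℕ) ≠ (k : ℕ) + 1 := fun hval => hjne (Fin.ext hval)
      simp only [periodPhi, Matrix.of_apply]
      rw [if_neg (by omega), if_neg (by omega), if_neg (by omega), mul_zero]
    · intro hni; exact absurd (Finset.mem_univ _) hni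
  · have hk' : (k : ℕ) + 1 = h := by have := k.isLt; omega
    rw [Finset.sum_eq_single (⟨0, by omega⟩ : Fin h)]
    · simp only [periodPsi, periodPhi, periodE, Matrix.of_apply, Matrix.add_apply,
        Matrix.one_apply, Fin.ext_iff, Fin.val_mk, zero_add, true_and, and_true, false_and,
        and_false, if_true, if_false, not_true, not_false_iff]
      split_ifs <;>
        first
          | (exfalso; omega)
          | linear_combination hpc
          | ring
    · intro j _ hjne
      have hv : (j : ℕ) ≠ 0 := fun hval => hjne (Fin.ext hval)
      simp only [periodPhi, Matrix.of_apply]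
      rw [if_neg (by omega), if_neg (by omega), if_neg (by omega), mul_zero]
    · intro hni; exact absurd (Finset.mem_univ _) hni



/-- In `T = ℚ_p⟦u₁, …, u_{h−1}⟧`: if `A ≡ I mod J` satisfies `A = Ψ·σ(A)·Ψ̄⁻¹`, then
`A ≡ I + E mod J^p`, i.e. every entry of `A − (I + E)` lies in `J^p`. -/
theorem horizontal_sections_congruent_period_matrix (p : ℕ) [Fact p.Prime]
    (h : ℕ) (hh : 2 ≤ h)
    (σ : MvPowerSeries (Fin (h - 1)) ℚ_[p] →+* MvPowerSeries (Fin (h - 1)) ℚ_[p])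
    (hσ₁ : ∀ (F : MvPowerSeries (Fin (h - 1)) ℚ_[p]) (e : Fin (h - 1) →₀ ℕ),
      MvPowerSeries.coeff (p • e) (σ F) = MvPowerSeries.coeff e F)
    (hσ₂ : ∀ (F : MvPowerSeries (Fin (h - 1)) ℚ_[p]) (d : Fin (h - 1) →₀ ℕ),
      (∀ e : Fin (h - 1) →₀ ℕ, d ≠ p • e) → MvPowerSeries.coeff d (σ F) = 0)
    (J : Ideal (MvPowerSeries (Fin (h - 1)) ℚ_[p]))
    (hJ : J = Ideal.span (Set.range
      (MvPowerSeries.X : Fin (h - 1) → MvPowerSeries (Fin (h - 1)) ℚ_[p])))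
    (uX : ℕ → MvPowerSeries (Fin (h - 1)) ℚ_[p])
    (huX : uX = fun i => if hi : i - 1 < h - 1 then MvPowerSeries.X ⟨i - 1, hi⟩ else 0)
    (A : Matrix (Fin h) (Fin h) (MvPowerSeries (Fin (h - 1)) ℚ_[p]))
    (hA₁ : ∀ i j, (A - 1) i j ∈ J)
    (hA₂ : A = periodPsi p h (MvPowerSeries (Fin (h - 1)) ℚ_[p]) uX * A.map ⇑σ *
      (periodPsi p h (MvPowerSeries (Fin (h - 1)) ℚ_[p]) fun _ => 0)⁻¹) :
    ∀ i j, (A - (1 + periodE h (MvPowerSeries (Fin (h - 1)) ℚ_[p]) uX)) i j ∈ J ^ p := by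
  have hp : p.Prime := Fact.out
  have hp0 : ((p : ℚ_[p]) : ℚ_[p]) ≠ 0 := Nat.cast_ne_zero.mpr hp.ne_zero
  set c : (MvPowerSeries (Fin (h - 1)) ℚ_[p]) := MvPowerSeries.C ((p : ℚ_[p])⁻¹) with hc
  have hpc : (p : MvPowerSeries (Fin (h - 1)) ℚ_[p]) * c = 1 := by
    rw [hc, show ((p : ℕ) : MvPowerSeries (Fin (h - 1)) ℚ_[p]) = MvPowerSeries.C ((p : ℕ) : ℚ_[p]) from
      (map_natCast (MvPowerSeries.C (σ := Fin (h - 1)) (R := ℚ_[p])) p).symm,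
      ← map_mul, mul_inv_cancel₀ hp0, map_one]
  set Φ : Matrix (Fin h) (Fin h) (MvPowerSeries (Fin (h - 1)) ℚ_[p]) := periodPhi h (MvPowerSeries (Fin (h - 1)) ℚ_[p]) c with hΦ
  have hE0 : periodE h (MvPowerSeries (Fin (h - 1)) ℚ_[p]) (fun _ => 0) = 0 := by
    ext a b
    simp [periodE, Matrix.zero_apply]
  have hinv : (periodPsi p h (MvPowerSeries (Fin (h - 1)) ℚ_[p]) (fun _ => 0))⁻¹ = Φ :=
    Matrix.inv_eq_right_inv (by rw [hΦ, psi_mul_phi p h hh (MvPowerSeries (Fin (h - 1)) ℚ_[p]) _ c hpc, hE0, add_zero])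
  have hmap : A.map ⇑σ = 1 + (A - 1).map ⇑σ := by
    conv_lhs => rw [show A = 1 + (A - 1) from by abel]
    rw [Matrix.map_add _ (fun a b => map_add σ a b),
      Matrix.map_one _ (map_zero σ) (map_one σ)]
  have key : A - (1 + periodE h (MvPowerSeries (Fin (h - 1)) ℚ_[p]) uX) = periodPsi p h (MvPowerSeries (Fin (h - 1)) ℚ_[p]) uX * ((A - 1).map ⇑σ) * Φ := by
    conv_lhs => rw [hA₂, hinv, hmap]
    rw [mul_add, mul_one, add_mul, psi_mul_phi p h hh (MvPowerSeries (Fin (h - 1)) ℚ_[p]) uX c hpc]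
    abel
  have hB0 : ∀ l j, MvPowerSeries.coeff 0 ((A - 1) l j) = 0 := by
    intro l j
    have hmem := hA₁ l j
    rw [hJ] at hmem
    have hsub : Ideal.span (Set.range (MvPowerSeries.X : Fin (h - 1) → MvPowerSeries (Fin (h - 1)) ℚ_[p])) ≤
        RingHom.ker (MvPowerSeries.constantCoeff) := by
      rw [Ideal.span_le]
      rintro _ ⟨i', rfl⟩
      simp [RingHom.mem_ker, MvPowerSeries.constantCoeff_X]
    have := hsub hmem
    rwa [RingHom.mem_ker, ← MvPowerSeries.coeff_zero_eq_constantCoeff_apply] at this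
  intro i k
  rw [key, hJ, Matrix.mul_apply]
  refine Ideal.sum_mem _ fun j _ => Ideal.mul_mem_right _ _ ?_
  rw [Matrix.mul_apply]
  refine Ideal.sum_mem _ fun l _ => Ideal.mul_mem_left _ _ ?_
  rw [Matrix.map_apply]
  refine mem_pow_span_X p _ ?_
  intro d hd
  by_cases hd0 : d = 0
  · subst hd0
    have h1 := hσ₁ ((A - 1) l j) 0
    rw [smul_zero] at h1
    rw [h1]
    exact hB0 l j
  · refine hσ₂ _ _ ?_
    intro e he
    have he0 : e ≠ 0 := by rintro rfl; rw [smul_zero] at he; exact hd0 he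
    obtain ⟨i', hi'⟩ := Finsupp.ne_iff.mp he0
    simp only [Finsupp.coe_zero, Pi.zero_apply] at hi'
    have hle : (p : ℕ) ≤ ∑ jj, d jj := by
      have h1 : p ≤ p * e i' := Nat.le_mul_of_pos_right _ (Nat.pos_of_ne_zero hi')
      have h2 : p * e i' ≤ ∑ jj, ((p • e : Fin (h - 1) →₀ ℕ)) jj := by
        have : ((p • e : Fin (h - 1) →₀ ℕ)) i' = p * e i' := by
          rw [Finsupp.smul_apply, smul_eq_mul]
        rw [← this]
        exact Finset.single_le_sum (f := fun jj => ((p • e : Fin (h - 1) →₀ ℕ)) jj)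
          (fun _ _ => Nat.zero_le _) (Finset.mem_univ i')
      calc p ≤ p * e i' := h1
        _ ≤ ∑ jj, ((p • e : Fin (h - 1) →₀ ℕ)) jj := h2
        _ = ∑ jj, d jj := by rw [← he]
    omega
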